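/- Let k be an algebraically closed field with char k ≠ 2, and let d, d' ∈ k with d ≠ 1 and d' ≠ 1. Then there is a graded isomorphism W(d) ≅ W(d') if and only if d = d'. -/

import Mathlib

noncomputable section

/-- The free algebra on three generators `x, y, z` (indexed by `Fin 3`). -/
abbrev F3 (k : Type) [Field k] : Type := FreeAlgebra k (Fin 3)

noncomputable def X (k : Type) [Field k] : F3 k := FreeAlgebra.ι k 0
noncomputable def Y (k : Type) [Field k] : F3 k := FreeAlgebra.ι k 1
noncomputable def Z (k : Type) [Field k] : F3 k := FreeAlgebra.ι k 2

/-- The quotient of the free algebra on `x, y, z` by the two-sided ideal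
generated by the set `rels`. -/
abbrev quotAlg (k : Type) [Field k] (rels : Set (F3 k)) : Type :=
  RingQuot (fun a b : F3 k => a ∈ rels ∧ b = 0)

/-- The image of the `i`-th generator in the quotient algebra. -/
noncomputable def gen (k : Type) [Field k] (rels : Set (F3 k)) (i : Fin 3) :
    quotAlg k rels :=
  RingQuot.mkAlgHom k (fun a b : F3 k => a ∈ rels ∧ b = 0) (FreeAlgebra.ι k i)

/-- The `k`-linear span of the images of the generators in the quotient. -/
noncomputable def genSpan (k : Type) [Field k] (rels : Set (F3 k)) :
    Submodule k (quotAlg k rels) :=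
  Submodule.span k (Set.range (gen k rels))

/-- There is a graded isomorphism between the two quotient algebras:
a `k`-algebra isomorphism carrying the span of the generators onto the
span of the generators. -/
def GradedIso (k : Type) [Field k] (r1 r2 : Set (F3 k)) : Prop :=
  ∃ φ : quotAlg k r1 ≃ₐ[k] quotAlg k r2,
    Submodule.map φ.toLinearMap (genSpan k r1) = genSpan k r2

/-- Relations of `W(d) = k⟨x,y,z⟩/⟨xy − yx, zx − d·xz − yz, zy − d·yz⟩`. -/
noncomputable def Wdrel (k : Type) [Field k] (d : k) : Set (F3 k) :=
  {X k * Y k - Y k * X k,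
   Z k * X k - d • (X k * Z k) - Y k * Z k,
   Z k * Y k - d • (Y k * Z k)}

abbrev P3 (k : Type) [Field k] : Type := MvPolynomial (Fin 3) k

noncomputable def tw (k : Type) [Field k] (d : k) : P3 k →ₐ[k] P3 k :=
  MvPolynomial.aeval ![d • MvPolynomial.X 0 + MvPolynomial.X 1, d • MvPolynomial.X 1, MvPolynomial.X 2]

lemma tw0 (k : Type) [Field k] (d : k) : tw k d (MvPolynomial.X 0) = d • MvPolynomial.X 0 + MvPolynomial.X 1 := by
  simp [tw]

lemma tw1 (k : Type) [Field k] (d : k) : tw k d (MvPolynomial.X 1) = d • MvPolynomial.X 1 := by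
  simp [tw]

lemma tw2 (k : Type) [Field k] (d : k) : tw k d (MvPolynomial.X 2) = MvPolynomial.X 2 := by
  simp [tw]

noncomputable def op (k : Type) [Field k] (d : k) : Fin 3 → Module.End k (P3 k)
  | 0 => LinearMap.mulLeft k (MvPolynomial.X 0)
  | 1 => LinearMap.mulLeft k (MvPolynomial.X 1)
  | 2 => (LinearMap.mulLeft k (MvPolynomial.X 2)).comp (tw k d).toLinearMap

lemma op0_apply (k : Type) [Field k] (d : k) (p : P3 k) : op k d 0 p = MvPolynomial.X 0 * p := rfl
lemma op1_apply (k : Type) [Field k] (d : k) (p : P3 k) : op k d 1 p = MvPolynomial.X 1 * p := rfl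
lemma op2_apply (k : Type) [Field k] (d : k) (p : P3 k) : op k d 2 p = MvPolynomial.X 2 * tw k d p := rfl

noncomputable def psi (k : Type) [Field k] (d : k) : F3 k →ₐ[k] Module.End k (P3 k) :=
  FreeAlgebra.lift k (op k d)

lemma psi_rel (k : Type) [Field k] (d : k) :
    ∀ a ∈ Wdrel k d, psi k d a = 0 := by
  intro a ha
  have hx : psi k d (X k) = op k d 0 := FreeAlgebra.lift_ι_apply _ _
  have hy : psi k d (Y k) = op k d 1 := FreeAlgebra.lift_ι_apply _ _
  have hz : psi k d (Z k) = op k d 2 := FreeAlgebra.lift_ι_apply _ _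
  rcases ha with h | h | h <;> subst h <;>
    · refine LinearMap.ext fun p => ?_
      simp only [map_sub, map_mul, map_smul, hx, hy, hz, Module.End.mul_apply,
        LinearMap.sub_apply, LinearMap.smul_apply, LinearMap.zero_apply,
        op0_apply, op1_apply, op2_apply, tw0, tw1, tw2,
        MvPolynomial.smul_eq_C_mul, add_mul]
      ring

noncomputable def psiq (k : Type) [Field k] (d : k) :
    quotAlg k (Wdrel k d) →ₐ[k] Module.End k (P3 k) :=
  RingQuot.liftAlgHom k ⟨psi k d, by
    rintro a b ⟨ha, rfl⟩
    simp [psi_rel k d a ha]⟩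

lemma psiq_gen (k : Type) [Field k] (d : k) (i : Fin 3) :
    psiq k d (gen k (Wdrel k d) i) = op k d i := by
  rw [gen, psiq, RingQuot.liftAlgHom_mkAlgHom_apply]
  exact FreeAlgebra.lift_ι_apply _ _

lemma psiq_one_gen (k : Type) [Field k] (d : k) (i : Fin 3) :
    (psiq k d (gen k (Wdrel k d) i)) 1 = MvPolynomial.X i := by
  fin_cases i <;>
    simp [psiq_gen, op0_apply, op1_apply, op2_apply, map_one]

lemma key1 (k : Type) [Field k] (d : k) (u : Fin 3 → k) (w : Fin 3 → k) :
    MvPolynomial.eval w ((psiq k d (∑ i, u i • gen k (Wdrel k d) i)) 1) =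
      u 0 * w 0 + u 1 * w 1 + u 2 * w 2 := by
  simp only [Fin.sum_univ_three, map_add, map_smul, LinearMap.add_apply,
    LinearMap.smul_apply, psiq_one_gen, MvPolynomial.smul_eq_C_mul]
  simp

lemma key2 (k : Type) [Field k] (d : k) (u v : Fin 3 → k) (w : Fin 3 → k) :
    MvPolynomial.eval w ((psiq k d
        ((∑ i, u i • gen k (Wdrel k d) i) * (∑ j, v j • gen k (Wdrel k d) j))) 1) =
      (u 0 * w 0 + u 1 * w 1) * (v 0 * w 0 + v 1 * w 1 + v 2 * w 2)
        + u 2 * w 2 * (v 0 * (d * w 0 + w 1) + v 1 * (d * w 1) + v 2 * w 2) := by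
  simp only [Fin.sum_univ_three, map_add, map_smul, map_mul, LinearMap.add_apply,
    LinearMap.smul_apply, Module.End.mul_apply, psiq_gen, psiq_one_gen]
  have e0 : ∀ p : P3 k, psiq k d (gen k (Wdrel k d) 0) p = MvPolynomial.X 0 * p := by
    intro p; rw [psiq_gen]; rfl
  have e1 : ∀ p : P3 k, psiq k d (gen k (Wdrel k d) 1) p = MvPolynomial.X 1 * p := by
    intro p; rw [psiq_gen]; rfl
  have e2 : ∀ p : P3 k, psiq k d (gen k (Wdrel k d) 2) p = MvPolynomial.X 2 * tw k d p := by
    intro p; rw [psiq_gen]; rfl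
  simp only [e0, e1, e2, psiq_gen, op0_apply, op1_apply, op2_apply,
    map_add, map_smul, map_mul, map_one, tw0, tw1, tw2,
    MvPolynomial.smul_eq_C_mul, mul_one]
  simp
  ring

def Bf {k : Type} [Field k] (e : k) (u v w : Fin 3 → k) : k :=
  (u 0 * w 0 + u 1 * w 1) * (v 0 * w 0 + v 1 * w 1 + v 2 * w 2)
    + u 2 * w 2 * (v 0 * (e * w 0 + w 1) + v 1 * (e * w 1) + v 2 * w 2)

lemma key2' (k : Type) [Field k] (d : k) (u v : Fin 3 → k) (w : Fin 3 → k) :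
    MvPolynomial.eval w ((psiq k d
        ((∑ i, u i • gen k (Wdrel k d) i) * (∑ j, v j • gen k (Wdrel k d) j))) 1) =
      Bf d u v w := key2 k d u v w

lemma relq1 (k : Type) [Field k] (d : k) :
    gen k (Wdrel k d) 0 * gen k (Wdrel k d) 1
      - gen k (Wdrel k d) 1 * gen k (Wdrel k d) 0 = 0 := by
  have h := RingQuot.mkAlgHom_rel (S := k)
    (s := fun a b : F3 k => a ∈ Wdrel k d ∧ b = 0)
    (x := X k * Y k - Y k * X k) (y := 0) ⟨by simp [Wdrel], rfl⟩
  simpa [map_sub, map_mul, gen, X, Y, Z] using h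

lemma relq2 (k : Type) [Field k] (d : k) :
    gen k (Wdrel k d) 2 * gen k (Wdrel k d) 0
      - d • (gen k (Wdrel k d) 0 * gen k (Wdrel k d) 2)
      - gen k (Wdrel k d) 1 * gen k (Wdrel k d) 2 = 0 := by
  have h := RingQuot.mkAlgHom_rel (S := k)
    (s := fun a b : F3 k => a ∈ Wdrel k d ∧ b = 0)
    (x := Z k * X k - d • (X k * Z k) - Y k * Z k) (y := 0) ⟨by simp [Wdrel], rfl⟩
  simpa [map_sub, map_mul, map_smul, gen, X, Y, Z] using h

lemma relq3 (k : Type) [Field k] (d : k) :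
    gen k (Wdrel k d) 2 * gen k (Wdrel k d) 1
      - d • (gen k (Wdrel k d) 1 * gen k (Wdrel k d) 2) = 0 := by
  have h := RingQuot.mkAlgHom_rel (S := k)
    (s := fun a b : F3 k => a ∈ Wdrel k d ∧ b = 0)
    (x := Z k * Y k - d • (Y k * Z k)) (y := 0) ⟨by simp [Wdrel], rfl⟩
  simpa [map_sub, map_mul, map_smul, gen, X, Y, Z] using h

lemma gen_coords (k : Type) [Field k] (d : k) (c : Fin 3 → k) (i : Fin 3)
    (h : ∑ j, c j • gen k (Wdrel k d) j = gen k (Wdrel k d) i)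
    (w : Fin 3 → k) :
    c 0 * w 0 + c 1 * w 1 + c 2 * w 2 = w i := by
  have h2 := congrArg (fun a => MvPolynomial.eval w ((psiq k d a) 1)) h
  simpa [key1, psiq_one_gen, Fin.sum_univ_three] using h2

theorem stmt12 (k : Type) [Field k] [IsAlgClosed k] (hchar : ringChar k ≠ 2)
    (d d' : k) (hd : d ≠ 1) (hd' : d' ≠ 1) :
    GradedIso k (Wdrel k d) (Wdrel k d') ↔ d = d' := by
  constructor
  · rintro ⟨φ, hφ⟩
    have hmem : ∀ i, φ (gen k (Wdrel k d) i) ∈ genSpan k (Wdrel k d') := by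
      intro i
      rw [← hφ]
      exact ⟨gen k (Wdrel k d) i, Submodule.subset_span ⟨i, rfl⟩, rfl⟩
    unfold genSpan at hmem
    obtain ⟨p, hp⟩ := (Submodule.mem_span_range_iff_exists_fun k).mp (hmem 0)
    obtain ⟨q, hq⟩ := (Submodule.mem_span_range_iff_exists_fun k).mp (hmem 1)
    obtain ⟨r, hr⟩ := (Submodule.mem_span_range_iff_exists_fun k).mp (hmem 2)
    -- surjectivity gives an inverse matrix
    have hNrow : ∀ i : Fin 3, ∃ c : Fin 3 → k, ∀ j : Fin 3,
        c 0 * p j + c 1 * q j + c 2 * r j = if i = j then (1:k) else 0 := by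
      intro i
      have hi : gen k (Wdrel k d') i ∈
          Submodule.map φ.toLinearMap (genSpan k (Wdrel k d)) := by
        rw [hφ]; exact Submodule.subset_span ⟨i, rfl⟩
      obtain ⟨w, hw, hwφ⟩ := hi
      unfold genSpan at hw
      obtain ⟨c, hc⟩ := (Submodule.mem_span_range_iff_exists_fun k).mp hw
      refine ⟨c, ?_⟩
      have helt : ∑ j, (c 0 * p j + c 1 * q j + c 2 * r j) • gen k (Wdrel k d') j
          = gen k (Wdrel k d') i := by
        have hfw : φ w = gen k (Wdrel k d') i := hwφ
        rw [← hc] at hfw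
        simp only [Fin.sum_univ_three, map_add, map_smul] at hfw ⊢
        rw [← hp, ← hq, ← hr] at hfw
        rw [← hfw]
        simp only [Fin.sum_univ_three, smul_add, smul_smul, add_smul]
        abel
      have hsc := gen_coords k d' _ i helt
      intro j
      have h := hsc (fun l => if l = j then (1:k) else 0)
      fin_cases j <;> simpa using h
    obtain ⟨c0, hc0⟩ := hNrow 0
    obtain ⟨c1, hc1⟩ := hNrow 1
    obtain ⟨c2, hc2⟩ := hNrow 2
    -- determinant nonzero
    have hdet3 : p 0 * (q 1 * r 2) - p 0 * (q 2 * r 1) - p 1 * (q 0 * r 2)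
        + p 1 * (q 2 * r 0) + p 2 * (q 0 * r 1) - p 2 * (q 1 * r 0) ≠ 0 := by
      set M : Matrix (Fin 3) (Fin 3) k := Matrix.of ![p, q, r] with hM
      set N : Matrix (Fin 3) (Fin 3) k := Matrix.of ![c0, c1, c2] with hN
      have hNM : N * M = 1 := by
        ext i j
        rw [Matrix.mul_apply, Fin.sum_univ_three, Matrix.one_apply]
        fin_cases i
        · simpa [hM, hN] using hc0 j
        · simpa [hM, hN] using hc1 j
        · simpa [hM, hN] using hc2 j
      have hdet : M.det ≠ 0 := by
        intro h0
        have hdm := congrArg Matrix.det hNM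
        rw [Matrix.det_mul, h0, mul_zero, Matrix.det_one] at hdm
        exact zero_ne_one hdm
      intro h0
      apply hdet
      rw [Matrix.det_fin_three]
      have e00 : M 0 0 = p 0 := rfl
      have e01 : M 0 1 = p 1 := rfl
      have e02 : M 0 2 = p 2 := rfl
      have e10 : M 1 0 = q 0 := rfl
      have e11 : M 1 1 = q 1 := rfl
      have e12 : M 1 2 = q 2 := rfl
      have e20 : M 2 0 = r 0 := rfl
      have e21 : M 2 1 = r 1 := rfl
      have e22 : M 2 2 = r 2 := rfl
      rw [e00, e01, e02, e10, e11, e12, e20, e21, e22]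
      linear_combination h0
    -- transported relations, evaluated
    have hB1 : ∀ w : Fin 3 → k, Bf d' p q w - Bf d' q p w = 0 := by
      intro w
      have h := congrArg φ (relq1 k d)
      rw [map_sub, map_mul, map_mul, map_zero, ← hp, ← hq] at h
      have h2 := congrArg (fun a => MvPolynomial.eval w ((psiq k d' a) 1)) h
      simpa only [map_sub, map_zero, LinearMap.sub_apply, LinearMap.zero_apply,
        MvPolynomial.eval_zero, key2'] using h2
    have hB2 : ∀ w : Fin 3 → k,
        Bf d' r p w - d * Bf d' p r w - Bf d' q r w = 0 := by
      intro w
      have h := congrArg φ (relq2 k d)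
      rw [map_sub, map_sub, map_mul, map_mul, map_smul, map_mul, map_zero,
        ← hp, ← hq, ← hr] at h
      have h2 := congrArg (fun a => MvPolynomial.eval w ((psiq k d' a) 1)) h
      simpa only [map_sub, map_zero, map_smul, LinearMap.sub_apply,
        LinearMap.zero_apply, LinearMap.smul_apply, MvPolynomial.eval_zero,
        MvPolynomial.smul_eval, key2'] using h2
    have hB3 : ∀ w : Fin 3 → k, Bf d' r q w - d * Bf d' q r w = 0 := by
      intro w
      have h := congrArg φ (relq3 k d)
      rw [map_sub, map_mul, map_smul, map_mul, map_zero, ← hq, ← hr] at h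
      have h2 := congrArg (fun a => MvPolynomial.eval w ((psiq k d' a) 1)) h
      simpa only [map_sub, map_zero, map_smul, LinearMap.sub_apply,
        LinearMap.zero_apply, LinearMap.smul_apply, MvPolynomial.eval_zero,
        MvPolynomial.smul_eval, key2'] using h2
    -- scalar endgame
    have hd1 : (1 : k) - d ≠ 0 := sub_ne_zero.mpr (Ne.symm hd)
    have hd1' : (1 : k) - d' ≠ 0 := sub_ne_zero.mpr (Ne.symm hd')
    have e1 := hB1 ![1, 0, 1]
    have e2 := hB1 ![0, 1, 1]
    simp only [Bf, Matrix.cons_val_zero, Matrix.cons_val_one, Matrix.head_cons,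
      Matrix.cons_val_two, Matrix.tail_cons] at e1 e2
    have hpq0 : p 0 * q 2 = p 2 * q 0 := by
      have h0 : (1 - d') * (p 0 * q 2 - p 2 * q 0) = 0 := by linear_combination e1
      rcases mul_eq_zero.mp h0 with h | h
      · exact absurd h hd1'
      · exact sub_eq_zero.mp h
    have hpq1 : p 1 * q 2 = p 2 * q 1 := by
      have h0 : (1 - d') * (p 1 * q 2 - p 2 * q 1) = 0 := by
        linear_combination e2 + hpq0
      rcases mul_eq_zero.mp h0 with h | h
      · exact absurd h hd1'
      · exact sub_eq_zero.mp h
    have hdet4 : (p 0 * q 1 - p 1 * q 0) * r 2 ≠ 0 := by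
      intro h0
      apply hdet3
      linear_combination h0 - r 1 * hpq0 + r 0 * hpq1
    have hr2 : r 2 ≠ 0 := right_ne_zero_of_mul hdet4
    have hD : p 0 * q 1 - p 1 * q 0 ≠ 0 := left_ne_zero_of_mul hdet4
    have e3c := hB3 ![0, 0, 1]
    have e2c := hB2 ![0, 0, 1]
    have e3a := hB3 ![1, 0, 0]
    have e3b := hB3 ![0, 1, 0]
    have e3ac := hB3 ![1, 0, 1]
    have e3bc := hB3 ![0, 1, 1]
    simp only [Bf, Matrix.cons_val_zero, Matrix.cons_val_one, Matrix.head_cons,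
      Matrix.cons_val_two, Matrix.tail_cons] at e3c e2c e3a e3b e3ac e3bc
    have hq2 : q 2 = 0 := by
      have h0 : (1 - d) * (q 2 * r 2) = 0 := by linear_combination e3c
      rcases mul_eq_zero.mp h0 with h | h
      · exact absurd h hd1
      · exact (mul_eq_zero.mp h).resolve_right hr2
    have hp2 : p 2 = 0 := by
      have h0 : (1 - d) * (p 2 * r 2) = 0 := by
        linear_combination e2c + r 2 * hq2
      rcases mul_eq_zero.mp h0 with h | h
      · exact absurd h hd1
      · exact (mul_eq_zero.mp h).resolve_right hr2
    by_contra hne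
    have hdd : d' - d ≠ 0 := fun h => hne (sub_eq_zero.mp h).symm
    have hq0 : q 0 = 0 := by
      have h0 : (d' - d) * (q 0 * r 2) = 0 := by
        linear_combination e3ac - e3a - (r 0 + r 2 - d * d' * r 0 - d * r 2) * hq2
      rcases mul_eq_zero.mp h0 with h | h
      · exact absurd h hdd
      · exact (mul_eq_zero.mp h).resolve_right hr2
    have hq1 : q 1 = 0 := by
      have h0 : (d' - d) * (q 1 * r 2) = 0 := by
        linear_combination e3bc - e3b - r 2 * hq0
          - (r 1 + r 2 - d * r 0 - d * d' * r 1 - d * r 2) * hq2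
      rcases mul_eq_zero.mp h0 with h | h
      · exact absurd h hdd
      · exact (mul_eq_zero.mp h).resolve_right hr2
    exact hD (by rw [hq0, hq1]; ring)
  · rintro rfl
    refine ⟨AlgEquiv.refl, ?_⟩
    have h : (AlgEquiv.refl :
        quotAlg k (Wdrel k d) ≃ₐ[k] quotAlg k (Wdrel k d)).toLinearMap
        = LinearMap.id := rfl
    rw [h, Submodule.map_id]
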